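/- arXiv:1905.03210 — 2 statements merged into one kernel-verified Lean document; each statement's English description precedes it below -/
import Mathlib

section
/- Let G = ⟨S | R⟩ be a group presentation with all relators of even length. For a geodesic word w and a letter s ∈ S ∪ S⁻¹, the word ws is geodesic if and only if s⁻¹ ∉ R([w]), where R(g) denotes the set of letters t ∈ S ∪ S⁻¹ such that some geodesic word ending in t represents g. -/
section GeneralPresentation

variable {S : Type*}

/-- The element of the presented group represented by a letter `(s, e)`:
`s` if `e = true`, `s⁻¹` if `e = false`. -/
def evalLetter (rels : Set (FreeGroup S)) (t : S × Bool) : PresentedGroup rels :=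
  if t.2 then PresentedGroup.of t.1 else (PresentedGroup.of t.1)⁻¹

/-- The element of the presented group represented by a word in `S ∪ S⁻¹`. -/
def evalW (rels : Set (FreeGroup S)) (w : List (S × Bool)) : PresentedGroup rels :=
  (w.map (evalLetter rels)).prod

/-- The word length (distance to the identity in the word metric) of an element
of the presented group with respect to the generating set `S`. -/
noncomputable def wlen (rels : Set (FreeGroup S)) (g : PresentedGroup rels) : ℕ :=
  sInf {m | ∃ w : List (S × Bool), evalW rels w = g ∧ w.length = m}

/-- A word is geodesic if its length equals the word length of the element it represents. -/
def IsGeodesic (rels : Set (FreeGroup S)) (w : List (S × Bool)) : Prop :=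
  w.length = wlen rels (evalW rels w)

/-- `Rset rels g` is the set of letters `t ∈ S ∪ S⁻¹` such that some geodesic word
ending in `t` represents `g`. -/
def Rset (rels : Set (FreeGroup S)) (g : PresentedGroup rels) : Set (S × Bool) :=
  {t | ∃ v : List (S × Bool), IsGeodesic rels (v ++ [t]) ∧ evalW rels (v ++ [t]) = g}

/-- The inverse of a letter. -/
def invLetter (t : S × Bool) : S × Bool := (t.1, !t.2)

/-- All relators of the presentation have even length. -/
def EvenRels [DecidableEq S] (rels : Set (FreeGroup S)) : Prop :=
  ∀ r ∈ rels, Even (FreeGroup.toWord r).length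

end GeneralPresentation

section Aux

variable {S : Type*} (rels : Set (FreeGroup S))

lemma evalW_append (a b : List (S × Bool)) :
    evalW rels (a ++ b) = evalW rels a * evalW rels b := by
  simp [evalW]

lemma evalW_singleton (t : S × Bool) : evalW rels [t] = evalLetter rels t := by
  simp [evalW]

lemma evalLetter_invLetter (t : S × Bool) :
    evalLetter rels (invLetter t) = (evalLetter rels t)⁻¹ := by
  obtain ⟨s, b⟩ := t
  cases b <;> simp [evalLetter, invLetter]

lemma evalW_eq_lift (L : List (S × Bool)) :
    evalW rels L = FreeGroup.lift (fun s => (PresentedGroup.of s : PresentedGroup rels))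
      (FreeGroup.mk L) := by
  rw [FreeGroup.lift_mk]
  unfold evalW
  congr 1
  apply List.map_congr_left
  intro x _
  obtain ⟨s, b⟩ := x
  cases b <;> simp [evalLetter]

lemma exists_word [DecidableEq S] (g : PresentedGroup rels) :
    ∃ L : List (S × Bool), evalW rels L = g := by
  obtain ⟨r, rfl⟩ := PresentedGroup.mk_surjective rels g
  refine ⟨r.toWord, ?_⟩
  rw [evalW_eq_lift, FreeGroup.mk_toWord]
  have : FreeGroup.lift (fun s => (PresentedGroup.of s : PresentedGroup rels))
      = PresentedGroup.mk rels := by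
    apply FreeGroup.ext_hom
    intro a
    simp [PresentedGroup.of, PresentedGroup.mk]
  rw [this]

lemma wlen_le {L : List (S × Bool)} {g : PresentedGroup rels} (h : evalW rels L = g) :
    wlen rels g ≤ L.length :=
  Nat.sInf_le ⟨L, h, rfl⟩

lemma exists_geodesic [DecidableEq S] (g : PresentedGroup rels) :
    ∃ L : List (S × Bool), evalW rels L = g ∧ L.length = wlen rels g := by
  obtain ⟨L, hL⟩ := exists_word rels g
  have hne : {m | ∃ w : List (S × Bool), evalW rels w = g ∧ w.length = m}.Nonempty :=
    ⟨L.length, L, hL, rfl⟩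
  exact Nat.sInf_mem hne

lemma inv_ofAdd_one :
    (Multiplicative.ofAdd (1 : ZMod 2))⁻¹ = Multiplicative.ofAdd (1 : ZMod 2) := by
  decide

lemma prod_map_parity (L : List (S × Bool)) :
    (L.map fun x : S × Bool => cond x.2 (Multiplicative.ofAdd (1 : ZMod 2))
      (Multiplicative.ofAdd (1 : ZMod 2))⁻¹).prod
    = Multiplicative.ofAdd ((L.length : ZMod 2)) := by
  induction L with
  | nil => simp
  | cons x L ih =>
    rw [List.map_cons, List.prod_cons, ih]
    obtain ⟨s, b⟩ := x
    have : (cond b (Multiplicative.ofAdd (1 : ZMod 2))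
        (Multiplicative.ofAdd (1 : ZMod 2))⁻¹) = Multiplicative.ofAdd (1 : ZMod 2) := by
      cases b
      · exact inv_ofAdd_one
      · rfl
    rw [this, ← ofAdd_add]
    congr 1
    rw [List.length_cons]
    push_cast
    ring

/-- the parity homomorphism -/
noncomputable def parityHom [DecidableEq S] (heven : EvenRels rels) :
    PresentedGroup rels →* Multiplicative (ZMod 2) := by
  refine PresentedGroup.toGroup (f := fun _ : S => Multiplicative.ofAdd (1 : ZMod 2)) ?_
  intro r hr
  conv_lhs => rw [← FreeGroup.mk_toWord (x := r)]
  rw [FreeGroup.lift_mk, prod_map_parity]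
  have h2 : ((r.toWord.length : ℕ) : ZMod 2) = 0 :=
    (ZMod.natCast_eq_zero_iff _ _).2 (heven r hr).two_dvd
  rw [h2]
  rfl

lemma parityHom_evalW [DecidableEq S] (heven : EvenRels rels) (L : List (S × Bool)) :
    parityHom rels heven (evalW rels L) = Multiplicative.ofAdd ((L.length : ZMod 2)) := by
  induction L with
  | nil => simp [evalW]
  | cons x L ih =>
    have hc : evalW rels (x :: L) = evalLetter rels x * evalW rels L := by simp [evalW]
    rw [hc, map_mul, ih]
    obtain ⟨s, b⟩ := x
    have hof : parityHom rels heven (PresentedGroup.of s) = Multiplicative.ofAdd (1 : ZMod 2) :=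
      PresentedGroup.toGroup.of _
    have hl : parityHom rels heven (evalLetter rels (s, b))
        = Multiplicative.ofAdd (1 : ZMod 2) := by
      cases b
      · simp only [evalLetter]
        rw [if_neg (by simp), map_inv, hof, inv_ofAdd_one]
      · simpa [evalLetter] using hof
    rw [hl, ← ofAdd_add]
    congr 1
    rw [List.length_cons]
    push_cast
    ring

lemma length_parity [DecidableEq S] (heven : EvenRels rels) {L1 L2 : List (S × Bool)}
    (h : evalW rels L1 = evalW rels L2) : L1.length % 2 = L2.length % 2 := by
  have h1 := parityHom_evalW rels heven L1
  rw [h, parityHom_evalW rels heven L2] at h1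
  have h2 : ((L2.length : ℕ) : ZMod 2) = ((L1.length : ℕ) : ZMod 2) :=
    Multiplicative.ofAdd.injective h1
  exact ((ZMod.natCast_eq_natCast_iff _ _ _).1 h2.symm)

end Aux

/-- for a geodesic word `w` and a letter `s`, the word `ws` is geodesic
if and only if `s⁻¹ ∉ R([w])`. -/
theorem geodesic_append_iff {S : Type*} [DecidableEq S] (rels : Set (FreeGroup S))
    (heven : EvenRels rels) (w : List (S × Bool)) (t : S × Bool)
    (hw : IsGeodesic rels w) :
    IsGeodesic rels (w ++ [t]) ↔ invLetter t ∉ Rset rels (evalW rels w) := by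
  set g := evalW rels w with hg
  set h := evalW rels (w ++ [t]) with hh
  have hmul : h = g * evalLetter rels t := by
    rw [hh, evalW_append, evalW_singleton]
  have hn : w.length = wlen rels g := hw
  constructor
  · intro hgeo hmem
    obtain ⟨v, hv, hveq⟩ := hmem
    have hvlen : v.length + 1 = w.length := by
      have h3 : (v ++ [invLetter t]).length = wlen rels (evalW rels (v ++ [invLetter t])) := hv
      rw [hveq, ← hn] at h3
      simpa using h3
    have hvval : evalW rels v = h := by
      have h4 : evalW rels v * evalLetter rels (invLetter t) = g := by
        rw [← hveq, evalW_append, evalW_singleton]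
      rw [hmul, ← h4, evalLetter_invLetter]
      group
    have h1 : wlen rels h ≤ v.length := wlen_le rels hvval
    have h2 : (w ++ [t]).length = wlen rels h := hgeo
    simp only [List.length_append, List.length_singleton] at h2
    omega
  · intro hmem
    unfold IsGeodesic
    rw [← hh]
    have hle : wlen rels h ≤ w.length + 1 := by
      have := wlen_le rels (L := w ++ [t]) (g := h) rfl
      simpa using this
    have hne : wlen rels h ≠ w.length := by
      intro heq
      obtain ⟨v, hv, hvlen⟩ := exists_geodesic rels h
      have hpar : v.length % 2 = (w ++ [t]).length % 2 :=
        length_parity rels heven (by rw [hv, hh])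
      simp only [List.length_append, List.length_singleton] at hpar
      omega
    have hge : ¬ wlen rels h < w.length := by
      intro hlt
      obtain ⟨v, hv, hvlen⟩ := exists_geodesic rels h
      have hvg : evalW rels (v ++ [invLetter t]) = g := by
        rw [evalW_append, evalW_singleton, hv, evalLetter_invLetter, hmul]
        group
      have hlen2 : wlen rels g ≤ v.length + 1 := by
        have := wlen_le rels hvg
        simpa using this
      have hgeo2 : IsGeodesic rels (v ++ [invLetter t]) := by
        unfold IsGeodesic
        rw [hvg, ← hn]
        simp only [List.length_append, List.length_singleton]
        omega
      exact hmem ⟨v, hgeo2, hvg⟩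
    have hfin : wlen rels h = w.length + 1 := by omega
    simp [hfin]
end

section
/- If a braid diagram on n strings is k-regular winding (every subdiagram obtained by deleting n−k strings is minimal), then it is m-regular winding for all k ≤ m ≤ n. -/
/-- Relators of the braid group on `k` strands, presented on the generator alphabet `ℕ`:
braid relations and far commutativity among the genuine generators `σ_0, …, σ_{k-2}`,
while the out-of-range generators `σ_i`, `i ≥ k - 1`, are made trivial.
The resulting group is isomorphic to the braid group `B_k`. -/
def braidRelsN (k : ℕ) : Set (FreeGroup ℕ) :=
  {r | (∃ i : ℕ, i + 3 ≤ k ∧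
          r = .of i * .of (i+1) * .of i * (.of (i+1) * .of i * .of (i+1))⁻¹) ∨
       (∃ i j : ℕ, i + 2 ≤ j ∧ j + 2 ≤ k ∧
          r = .of i * .of j * (.of j * .of i)⁻¹) ∨
       (∃ i : ℕ, k ≤ i + 1 ∧ r = .of i)}

/-- The braid group on `k` strands. -/
abbrev BGroup (k : ℕ) := PresentedGroup (braidRelsN k)

/-- The braid on `k` strands represented by a word; a letter `(i, b)` stands for the
crossing `σᵢ` (if `b = true`) or `σᵢ⁻¹` (if `b = false`). -/
def evalN (k : ℕ) (w : List (ℕ × Bool)) : BGroup k :=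
  (w.map fun p => if p.2 then (PresentedGroup.of p.1 : BGroup k)
    else (PresentedGroup.of p.1)⁻¹).prod

/-- A word is a valid braid word (diagram) on `k` strands if all its letters are among
`σ_0^{±1}, …, σ_{k-2}^{±1}`. -/
def WValid (k : ℕ) (w : List (ℕ × Bool)) : Prop := ∀ p ∈ w, p.1 + 2 ≤ k

/-- A braid diagram on `k` strands is minimal if it has the least number of crossings
among all diagrams of the same braid. -/
def MinDiag (k : ℕ) (D : List (ℕ × Bool)) : Prop :=
  WValid k D ∧ ∀ D' : List (ℕ × Bool), WValid k D' → evalN k D' = evalN k D →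
    D.length ≤ D'.length

/-- Swap the entries at positions `i` and `i+1` of a list. -/
def swapAt' (cur : List ℕ) (i : ℕ) : List ℕ :=
  (cur.set i (cur.getD (i+1) 0)).set (i+1) (cur.getD i 0)

/-- Delete all strands whose (original) label is not kept. `cur` is the list of original
strand labels at the current positions; a crossing is kept iff both of its strands are
kept, and its new position is the number of kept strands to its left. -/
def deleteAux (keep : ℕ → Bool) : List ℕ → List (ℕ × Bool) → List (ℕ × Bool)
  | _, [] => []
  | cur, (i, b) :: rest =>
      (if keep (cur.getD i 0) && keep (cur.getD (i+1) 0)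
        then [(((cur.take i).countP keep), b)] else [])
      ++ deleteAux keep (swapAt' cur i) rest

/-- The subdiagram of a diagram `D` on `n` strands obtained by deleting all strands
outside `T`. It is a diagram on `T.card` strands. -/
def subDiag (n : ℕ) (T : Finset ℕ) (D : List (ℕ × Bool)) : List (ℕ × Bool) :=
  deleteAux (fun x => decide (x ∈ T)) (List.range n) D

/-- A diagram on `n` strands is `k`-regular winding if after deleting any `n - k` of its
strands the resulting subdiagram on `k` strands is minimal. -/
def RegWinding (n k : ℕ) (D : List (ℕ × Bool)) : Prop :=
  ∀ T ⊆ Finset.range n, T.card = k → MinDiag k (subDiag n T D)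

-- § basic list lemmas
lemma mk_rel {k : ℕ} {r : FreeGroup ℕ} (h : r ∈ braidRelsN k) :
    PresentedGroup.mk (braidRelsN k) r = 1 :=
  (QuotientGroup.eq_one_iff r).2 (Subgroup.subset_normalClosure h)

lemma braid_rel {k p : ℕ} (h : p + 3 ≤ k) :
    (PresentedGroup.of p : BGroup k) * .of (p+1) * .of p = .of (p+1) * .of p * .of (p+1) := by
  have := mk_rel (k := k) (r := .of p * .of (p+1) * .of p * (.of (p+1) * .of p * .of (p+1))⁻¹)
    (Or.inl ⟨p, h, rfl⟩)
  simp only [map_mul, map_inv] at this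
  rw [mul_inv_eq_one] at this
  exact this

lemma comm_rel {k p q : ℕ} (h1 : p + 2 ≤ q) (h2 : q + 2 ≤ k) :
    (PresentedGroup.of p : BGroup k) * .of q = .of q * .of p := by
  have := mk_rel (k := k) (r := .of p * .of q * (.of q * .of p)⁻¹)
    (Or.inr (Or.inl ⟨p, q, h1, h2, rfl⟩))
  simp only [map_mul, map_inv] at this
  rw [mul_inv_eq_one] at this
  exact this

lemma swapAt'_append (pre : List ℕ) (a b : ℕ) (post : List ℕ) :
    swapAt' (pre ++ a :: b :: post) pre.length = pre ++ b :: a :: post := by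
  induction pre with
  | nil => simp [swapAt']
  | cons c t ih =>
      simp only [List.cons_append, List.length_cons, swapAt'] at *
      simp_all [List.getD_cons_succ, List.set_cons_succ]

lemma exists_two (l : List ℕ) (i : ℕ) (h : i + 2 ≤ l.length) :
    ∃ pre a b post, l = pre ++ a :: b :: post ∧ pre.length = i := by
  induction i generalizing l with
  | zero =>
      match l, h with
      | a :: b :: t, _ => exact ⟨[], a, b, t, rfl, rfl⟩
  | succ j ih =>
      match l, h with
      | c :: t, h =>
        obtain ⟨pre, a, b, post, h1, h2⟩ := ih t (by simpa using h)
        exact ⟨c :: pre, a, b, post, by simp [h1], by simp [h2]⟩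

lemma exists_three (l : List ℕ) (i : ℕ) (h : i + 3 ≤ l.length) :
    ∃ pre a b c post, l = pre ++ a :: b :: c :: post ∧ pre.length = i := by
  obtain ⟨pre, a, b, post, h1, h2⟩ := exists_two l i (by omega)
  match post, (by subst h1; simp at h; omega : 1 ≤ post.length) with
  | c :: post', _ => exact ⟨pre, a, b, c, post', by simp [h1], h2⟩

lemma swapAt'_perm {l : List ℕ} {i : ℕ} (h : i + 2 ≤ l.length) : (swapAt' l i).Perm l := by
  obtain ⟨pre, a, b, post, rfl, rfl⟩ := exists_two l i h
  rw [swapAt'_append]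
  exact (List.Perm.append_left pre (List.Perm.swap a b post))

lemma swapAt'_swapAt' {l : List ℕ} {i : ℕ} (h : i + 2 ≤ l.length) :
    swapAt' (swapAt' l i) i = l := by
  obtain ⟨pre, a, b, post, rfl, rfl⟩ := exists_two l i h
  rw [swapAt'_append, swapAt'_append]

lemma getD_len (pre : List ℕ) (a : ℕ) (rest : List ℕ) :
    (pre ++ a :: rest).getD pre.length 0 = a := by
  induction pre with
  | nil => rfl
  | cons c t ih => simpa using ih

-- § the state space
section Machine
variable (m k : ℕ) (keep : ℕ → Bool)

def XS := {l : List ℕ // l.Perm (List.range m)}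

variable {m} in
lemma XS.len (x : XS m) : x.1.length = m := by
  simpa using x.2.length_eq

def Sfun (i : ℕ) (x : XS m) : XS m :=
  if h : i + 2 ≤ m then ⟨swapAt' x.1 i, (swapAt'_perm (by rw [x.len]; exact h)).trans x.2⟩ else x

lemma Sfun_invol (i : ℕ) : Function.Involutive (Sfun m i) := by
  intro x
  by_cases h : i + 2 ≤ m
  · have e : ∀ y : XS m, (Sfun m i y).1 = swapAt' y.1 i := fun y => congrArg Subtype.val (dif_pos h)
    exact Subtype.ext (by rw [e, e]; exact swapAt'_swapAt' (by rw [x.len]; exact h))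
  · have e : ∀ y : XS m, Sfun m i y = y := fun y => dif_neg h
    rw [e, e]

def SP (i : ℕ) : Equiv.Perm (XS m) := (Sfun_invol m i).toPerm _

lemma SP_symm (i : ℕ) : (SP m i).symm = SP m i := rfl

lemma SP_apply (i : ℕ) (x : XS m) : (SP m i x).1 = if i + 2 ≤ m then swapAt' x.1 i else x.1 := by
  show (Sfun m i x).1 = _
  by_cases h : i + 2 ≤ m
  · rw [if_pos h]; exact congrArg Subtype.val (dif_pos h)
  · rw [if_neg h]; exact congrArg Subtype.val (dif_neg h)

def EF (i : ℕ) (x : XS m) : BGroup k :=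
  if keep (x.1.getD i 0) && keep (x.1.getD (i+1) 0)
    then PresentedGroup.of ((x.1.take i).countP keep) else 1

-- the wreath-type group
def permAct (X : Type*) (H : Type*) [Group H] : Equiv.Perm X →* MulAut (X → H) where
  toFun σ :=
    { toFun := fun f => f ∘ σ.symm
      invFun := fun f => f ∘ σ
      left_inv := fun f => by ext x; simp
      right_inv := fun f => by ext x; simp
      map_mul' := fun f g => rfl }
  map_one' := by ext f x; rfl
  map_mul' σ τ := by ext f x; rfl

abbrev WG := (XS m → BGroup k) ⋊[permAct (XS m) (BGroup k)] Equiv.Perm (XS m)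

def gen (i : ℕ) : WG m k :=
  if i + 2 ≤ m then ⟨EF m k keep i, SP m i⟩ else 1
end Machine

section Rels
variable (m k : ℕ) (keep : ℕ → Bool)

lemma getD_len1 (pre : List ℕ) (a b : ℕ) (rest : List ℕ) :
    (pre ++ a :: b :: rest).getD (pre.length + 1) 0 = b := by
  have := getD_len (pre ++ [a]) b rest
  simpa using this

lemma take_len (pre : List ℕ) (a : ℕ) (rest : List ℕ) :
    (pre ++ a :: rest).take pre.length = pre := by
  simpa using List.take_left (l₁ := pre) (l₂ := a :: rest)

lemma take_len1 (pre : List ℕ) (a b : ℕ) (rest : List ℕ) :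
    (pre ++ a :: b :: rest).take (pre.length + 1) = pre ++ [a] := by
  have := take_len (pre ++ [a]) b rest
  simpa using this

lemma EF_val {i : ℕ} (x : XS m) {pre : List ℕ} {a b : ℕ} {post : List ℕ}
    (h : x.1 = pre ++ a :: b :: post) (hi : pre.length = i) :
    EF m k keep i x = if keep a && keep b then
      PresentedGroup.of (pre.countP keep) else 1 := by
  subst hi; unfold EF; rw [h, getD_len, getD_len1, take_len]

lemma swapAt'_append1 (pre : List ℕ) (a b c : ℕ) (post : List ℕ) :
    swapAt' (pre ++ a :: b :: c :: post) (pre.length + 1) = pre ++ a :: c :: b :: post := by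
  have := swapAt'_append (pre ++ [a]) b c post
  simpa using this

lemma SP_apply' {i : ℕ} (h : i + 2 ≤ m) (x : XS m) : (SP m i x).1 = swapAt' x.1 i := by
  rw [SP_apply, if_pos h]

lemma countP_XS {x : XS m} (hkc : (List.range m).countP keep = k) : x.1.countP keep = k := by
  rw [x.2.countP_eq, hkc]

lemma pair_left (a b : WG m k) (x : XS m) :
    (a * b).left x = a.left x * b.left (a.right.symm x) := rfl

lemma triple_left (a b c : WG m k) (x : XS m) :
    (a * b * c).left x = a.left x * b.left (a.right.symm x) *
      c.left (b.right.symm (a.right.symm x)) := rfl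

lemma gen_braid (hkc : (List.range m).countP keep = k) {i : ℕ} (h : i + 3 ≤ m) :
    gen m k keep i * gen m k keep (i+1) * gen m k keep i =
    gen m k keep (i+1) * gen m k keep i * gen m k keep (i+1) := by
  rw [gen, gen, if_pos (by omega : i + 2 ≤ m), if_pos (by omega : i + 1 + 2 ≤ m)]
  have hswap : ∀ x : XS m, (SP m i x).1 = swapAt' x.1 i := fun x => SP_apply' m (by omega) x
  have hswap1 : ∀ x : XS m, (SP m (i+1) x).1 = swapAt' x.1 (i+1) :=
    fun x => SP_apply' m (by omega) x
  have key : ∀ x : XS m, ∃ (pre : List ℕ) (a b c : ℕ) (post : List ℕ), x.1 = pre ++ a :: b :: c :: post ∧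
      pre.length = i := fun x => exists_three x.1 i (by rw [x.len]; omega)
  apply SemidirectProduct.ext
  · funext x
    obtain ⟨pre, a, b, c, post, hd, hl⟩ := key x
    rw [triple_left, triple_left]
    simp only [SP_symm]
    have e1 : (SP m i x).1 = pre ++ b :: a :: c :: post := by
      rw [hswap, hd, ← hl, swapAt'_append]
    have e2 : (SP m (i+1) (SP m i x)).1 = pre ++ b :: c :: a :: post := by
      rw [hswap1, e1, ← hl, swapAt'_append1]
    have f1 : (SP m (i+1) x).1 = pre ++ a :: c :: b :: post := by
      rw [hswap1, hd, ← hl, swapAt'_append1]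
    have f2 : (SP m i (SP m (i+1) x)).1 = pre ++ c :: a :: b :: post := by
      rw [hswap, f1, ← hl, swapAt'_append]
    have e1' : (SP m i x).1 = (pre ++ [b]) ++ a :: c :: post := by rw [e1]; simp
    have hd' : x.1 = (pre ++ [a]) ++ b :: c :: post := by rw [hd]; simp
    have f2' : (SP m i (SP m (i+1) x)).1 = (pre ++ [c]) ++ a :: b :: post := by rw [f2]; simp
    rw [EF_val m k keep x hd hl,
        EF_val m k keep (SP m i x) e1' (by simp [hl]),
        EF_val m k keep (SP m (i+1) (SP m i x)) e2 hl,
        EF_val m k keep x hd' (by simp [hl]),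
        EF_val m k keep (SP m (i+1) x) f1 hl,
        EF_val m k keep (SP m i (SP m (i+1) x)) f2' (by simp [hl])]
    have hcount : pre.countP keep + ((if keep a then 1 else 0) + ((if keep b then 1 else 0) +
          ((if keep c then 1 else 0) + post.countP keep))) = k := by
      have := countP_XS m k keep (x := x) hkc
      rw [hd] at this
      simpa [List.countP_append, List.countP_cons, Nat.add_comm, Nat.add_assoc,
        Nat.add_left_comm] using this
    cases hka : keep a <;> cases hkb : keep b <;> cases hkc' : keep c <;>
      simp [List.countP_append, List.countP_cons, hka, hkb, hkc']
    · -- all kept : genuine braid relation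
      exact braid_rel (by simp [hka, hkb, hkc'] at hcount; omega)
  · show SP m i * SP m (i+1) * SP m i = SP m (i+1) * SP m i * SP m (i+1)
    refine Equiv.ext fun x => Subtype.ext ?_
    obtain ⟨pre, a, b, c, post, hd, hl⟩ := key x
    simp only [Equiv.Perm.mul_apply]
    have e1 : (SP m i x).1 = pre ++ b :: a :: c :: post := by
      rw [hswap, hd, ← hl, swapAt'_append]
    have e2 : (SP m (i+1) (SP m i x)).1 = pre ++ b :: c :: a :: post := by
      rw [hswap1, e1, ← hl, swapAt'_append1]
    have f1 : (SP m (i+1) x).1 = pre ++ a :: c :: b :: post := by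
      rw [hswap1, hd, ← hl, swapAt'_append1]
    have f2 : (SP m i (SP m (i+1) x)).1 = pre ++ c :: a :: b :: post := by
      rw [hswap, f1, ← hl, swapAt'_append]
    rw [hswap, hswap1]
    calc swapAt' (swapAt' ((SP m i x).1) (i+1)) i
        = swapAt' (pre ++ b :: c :: a :: post) i := by rw [e1, ← hl, swapAt'_append1]
      _ = pre ++ c :: b :: a :: post := by rw [← hl, swapAt'_append]
      _ = swapAt' (pre ++ c :: a :: b :: post) (i+1) := by rw [← hl, swapAt'_append1]
      _ = swapAt' ((SP m i (SP m (i+1) x)).1) (i+1) := by rw [f2]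
      _ = (SP m (i+1) (SP m i (SP m (i+1) x))).1 := (hswap1 _).symm
end Rels

lemma gen_comm (m k : ℕ) (keep : ℕ → Bool) (hkc : (List.range m).countP keep = k)
    {i j : ℕ} (hij : i + 2 ≤ j) (hjm : j + 2 ≤ m) :
    gen m k keep i * gen m k keep j = gen m k keep j * gen m k keep i := by
  rw [gen, gen, if_pos (by omega : i + 2 ≤ m), if_pos (by omega : j + 2 ≤ m)]
  have hswapi : ∀ x : XS m, (SP m i x).1 = swapAt' x.1 i := fun x => SP_apply' m (by omega) x
  have hswapj : ∀ x : XS m, (SP m j x).1 = swapAt' x.1 j := fun x => SP_apply' m (by omega) x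
  have key : ∀ x : XS m, ∃ (pre mid post : List ℕ) (a b c d : ℕ),
      x.1 = pre ++ a :: b :: (mid ++ c :: d :: post) ∧ pre.length = i ∧
      (pre ++ a :: b :: mid).length = j := by
    intro x
    obtain ⟨pre, a, b, tail, hd, hl⟩ := exists_two x.1 i (by rw [x.len]; omega)
    have htl : tail.length = m - i - 2 := by
      have := x.len; rw [hd] at this; simp at this; omega
    obtain ⟨mid, c, d, post, hd2, hl2⟩ := exists_two tail (j - i - 2) (by omega)
    exact ⟨pre, mid, post, a, b, c, d, by rw [hd, hd2], hl, by simp [hl, hl2]; omega⟩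
  apply SemidirectProduct.ext
  · funext x
    rw [pair_left, pair_left]
    simp only [SP_symm]
    obtain ⟨pre, mid, post, a, b, c, d, hd, hl, hlen2⟩ := key x
    have hbig : x.1 = (pre ++ a :: b :: mid) ++ c :: d :: post := by rw [hd]; simp
    have e1 : (SP m i x).1 = pre ++ b :: a :: (mid ++ c :: d :: post) := by
      rw [hswapi, hd, ← hl, swapAt'_append]
    have e1' : (SP m i x).1 = (pre ++ b :: a :: mid) ++ c :: d :: post := by rw [e1]; simp
    have hlen2' : (pre ++ b :: a :: mid).length = j := by
      simp at hlen2 ⊢; omega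
    have f1 : (SP m j x).1 = (pre ++ a :: b :: mid) ++ d :: c :: post := by
      rw [hswapj, hbig, ← hlen2, swapAt'_append]
    have f1' : (SP m j x).1 = pre ++ a :: b :: (mid ++ d :: c :: post) := by rw [f1]; simp
    rw [EF_val m k keep x hd hl,
        EF_val m k keep (SP m i x) e1' hlen2',
        EF_val m k keep x hbig hlen2,
        EF_val m k keep (SP m j x) f1' hl]
    have hcount : pre.countP keep + ((if keep a then 1 else 0) + ((if keep b then 1 else 0) +
        (mid.countP keep + ((if keep c then 1 else 0) + ((if keep d then 1 else 0) +
          post.countP keep))))) = k := by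
      have := countP_XS m k keep (x := x) hkc
      rw [hd] at this
      simpa [List.countP_append, List.countP_cons, Nat.add_comm, Nat.add_assoc,
        Nat.add_left_comm] using this
    cases hka : keep a <;> cases hkb : keep b <;> cases hkc' : keep c <;> cases hkd : keep d <;>
      simp [List.countP_append, List.countP_cons, hka, hkb, hkc', hkd, Nat.add_comm,
        Nat.add_assoc, Nat.add_left_comm]
    · -- all kept : far commutativity
      apply comm_rel
      · omega
      · simp [hka, hkb, hkc', hkd] at hcount; omega
  · show SP m i * SP m j = SP m j * SP m i
    refine Equiv.ext fun x => Subtype.ext ?_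
    obtain ⟨pre, mid, post, a, b, c, d, hd, hl, hlen2⟩ := key x
    have hbig : x.1 = (pre ++ a :: b :: mid) ++ c :: d :: post := by rw [hd]; simp
    have e1 : (SP m i x).1 = pre ++ b :: a :: (mid ++ c :: d :: post) := by
      rw [hswapi, hd, ← hl, swapAt'_append]
    have e1' : (SP m i x).1 = (pre ++ b :: a :: mid) ++ c :: d :: post := by rw [e1]; simp
    have hlen2' : (pre ++ b :: a :: mid).length = j := by
      simp at hlen2 ⊢; omega
    have f1 : (SP m j x).1 = (pre ++ a :: b :: mid) ++ d :: c :: post := by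
      rw [hswapj, hbig, ← hlen2, swapAt'_append]
    have f1' : (SP m j x).1 = pre ++ a :: b :: (mid ++ d :: c :: post) := by rw [f1]; simp
    simp only [Equiv.Perm.mul_apply]
    calc (SP m i (SP m j x)).1
        = swapAt' (pre ++ a :: b :: (mid ++ d :: c :: post)) i := by rw [hswapi, f1']
      _ = pre ++ b :: a :: (mid ++ d :: c :: post) := by rw [← hl, swapAt'_append]
      _ = (pre ++ b :: a :: mid) ++ d :: c :: post := by simp
      _ = swapAt' ((pre ++ b :: a :: mid) ++ c :: d :: post) j := by
            rw [← hlen2', swapAt'_append]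
      _ = (SP m j (SP m i x)).1 := by rw [hswapj, e1']

section Lift
variable (m k : ℕ) (keep : ℕ → Bool)

lemma gen_rels (hkc : (List.range m).countP keep = k) :
    ∀ r ∈ braidRelsN m, FreeGroup.lift (gen m k keep) r = 1 := by
  rintro r (⟨i, h, rfl⟩ | ⟨i, j, hij, hjm, rfl⟩ | ⟨i, h, rfl⟩) <;>
    simp only [map_mul, map_inv, FreeGroup.lift_apply_of]
  · rw [mul_inv_eq_one]
    exact gen_braid m k keep hkc h
  · rw [mul_inv_eq_one]
    exact gen_comm m k keep hkc hij hjm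
  · rw [gen, if_neg (by omega)]

noncomputable def Phi (hkc : (List.range m).countP keep = k) : BGroup m →* WG m k :=
  PresentedGroup.toGroup (gen_rels m k keep hkc)

lemma EF_swap {i : ℕ} (h : i + 2 ≤ m) (x : XS m) :
    EF m k keep i (SP m i x) = EF m k keep i x := by
  obtain ⟨pre, a, b, post, hd, hl⟩ := exists_two x.1 i (by rw [x.len]; omega)
  have e1 : (SP m i x).1 = pre ++ b :: a :: post := by
    rw [SP_apply' m h, hd, ← hl, swapAt'_append]
  rw [EF_val m k keep _ e1 hl, EF_val m k keep x hd hl]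
  cases keep a <;> cases keep b <;> simp

lemma evalN_cons (i : ℕ) (b : Bool) (w : List (ℕ × Bool)) :
    evalN k ((i,b) :: w) = (if b then (PresentedGroup.of i : BGroup k)
      else (PresentedGroup.of i)⁻¹) * evalN k w := by
  simp [evalN]

lemma evalN_append (u v : List (ℕ × Bool)) : evalN k (u ++ v) = evalN k u * evalN k v := by
  simp [evalN]

lemma Phi_eval (hkc : (List.range m).countP keep = k) (w : List (ℕ × Bool)) (hw : WValid m w)
    (x : XS m) :
    (Phi m k keep hkc (evalN m w)).left x = evalN k (deleteAux keep x.1 w) := by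
  induction w generalizing x with
  | nil => simp [evalN, deleteAux]
  | cons p rest ih =>
      obtain ⟨i, b⟩ := p
      have him : i + 2 ≤ m := hw (i, b) (by simp)
      have hrest : WValid m rest := fun q hq => hw q (by simp [hq])
      have hof : Phi m k keep hkc (PresentedGroup.of i) = ⟨EF m k keep i, SP m i⟩ := by
        rw [Phi, PresentedGroup.toGroup.of, gen, if_pos him]
      have hsp1 : (SP m i x).1 = swapAt' x.1 i := SP_apply' m him x
      rw [evalN_cons, map_mul]
      rw [show deleteAux keep x.1 ((i,b) :: rest) =
        (if keep (x.1.getD i 0) && keep (x.1.getD (i+1) 0)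
          then [(((x.1.take i).countP keep), b)] else [])
        ++ deleteAux keep (swapAt' x.1 i) rest from rfl]
      rw [evalN_append]
      have hEF : EF m k keep i x = if keep (x.1.getD i 0) && keep (x.1.getD (i+1) 0)
          then PresentedGroup.of ((x.1.take i).countP keep) else 1 := rfl
      cases b with
      | true =>
          simp only [reduceIte]
          rw [hof, pair_left]
          simp only [SP_symm]
          rw [ih hrest (SP m i x), hsp1]
          congr 1
          rw [hEF]
          split <;> simp [evalN]
      | false =>
          simp only [Bool.false_eq_true, if_false]
          rw [map_inv, hof]
          rw [show ({ left := EF m k keep i, right := SP m i } : WG m k)⁻¹ =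
            ⟨fun y => (EF m k keep i (SP m i y))⁻¹, SP m i⟩ from rfl]
          rw [pair_left]
          simp only [SP_symm]
          rw [ih hrest (SP m i x), hsp1, EF_swap m k keep him x]
          congr 1
          rw [hEF]
          split <;> simp [evalN]

end Lift

-- § validity of subdiagrams
lemma deleteAux_valid (keep : ℕ → Bool) :
    ∀ (w : List (ℕ × Bool)) (l : List ℕ), (∀ p ∈ w, p.1 + 2 ≤ l.length) →
      ∀ q ∈ deleteAux keep l w, q.1 + 2 ≤ l.countP keep := by
  intro w
  induction w with
  | nil => intro l _ q hq; simp [deleteAux] at hq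
  | cons p rest ih =>
      obtain ⟨i, b⟩ := p
      intro l hl q hq
      obtain ⟨pre, a, b', post, hd, hlen⟩ := exists_two l i (hl (i,b) (by simp))
      rw [show deleteAux keep l ((i,b) :: rest) =
        (if keep (l.getD i 0) && keep (l.getD (i+1) 0)
          then [(((l.take i).countP keep), b)] else [])
        ++ deleteAux keep (swapAt' l i) rest from rfl] at hq
      rw [List.mem_append] at hq
      rcases hq with hq | hq
      · rw [List.mem_ite_nil_right] at hq
        obtain ⟨hc, hq⟩ := hq
        rw [List.mem_singleton] at hq
        subst hq
        rw [hd, ← hlen] at hc ⊢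
        rw [getD_len, getD_len1] at hc
        rw [take_len]
        simp only [Bool.and_eq_true] at hc
        simp [List.countP_append, List.countP_cons, hc.1, hc.2]
      · have hswap : swapAt' l i = pre ++ b' :: a :: post := by rw [hd, ← hlen, swapAt'_append]
        have hcnt : (swapAt' l i).countP keep = l.countP keep := by
          rw [hswap, hd]
          simp [List.countP_append, List.countP_cons]
          omega
        have hlen' : (swapAt' l i).length = l.length := by
          rw [hswap, hd]; simp
        rw [← hcnt]
        exact ih (swapAt' l i) (fun p hp => hlen' ▸ hl p (by simp [hp])) q hq

-- § composition of deletions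
lemma deleteAux_comp (keepS keepU : ℕ → Bool) (rank : ℕ → ℕ) :
    ∀ (w : List (ℕ × Bool)) (cur : List ℕ), (∀ p ∈ w, p.1 + 2 ≤ cur.length) →
    deleteAux keepU ((cur.filter keepS).map rank) (deleteAux keepS cur w)
      = deleteAux (fun x => keepS x && keepU (rank x)) cur w := by
  intro w
  induction w with
  | nil => intro cur _; rfl
  | cons p rest ih =>
      obtain ⟨i, b⟩ := p
      intro cur hl
      obtain ⟨pre, a, b', post, hd, hlen⟩ := exists_two cur i (hl (i,b) (by simp))
      have hswap : swapAt' cur i = pre ++ b' :: a :: post := by rw [hd, ← hlen, swapAt'_append]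
      have hlen' : (swapAt' cur i).length = cur.length := by rw [hswap, hd]; simp
      have hrest : ∀ p ∈ rest, p.1 + 2 ≤ (swapAt' cur i).length :=
        fun p hp => hlen' ▸ hl p (by simp [hp])
      have hga : cur.getD i 0 = a := by rw [hd, ← hlen, getD_len]
      have hgb : cur.getD (i+1) 0 = b' := by rw [hd, ← hlen, getD_len1]
      have htk : cur.take i = pre := by rw [hd, ← hlen, take_len]
      rw [show deleteAux keepS cur ((i,b) :: rest) =
        (if keepS (cur.getD i 0) && keepS (cur.getD (i+1) 0)
          then [(((cur.take i).countP keepS), b)] else [])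
        ++ deleteAux keepS (swapAt' cur i) rest from rfl]
      rw [show deleteAux (fun x => keepS x && keepU (rank x)) cur ((i,b) :: rest) =
        (if (keepS (cur.getD i 0) && keepU (rank (cur.getD i 0))) &&
            (keepS (cur.getD (i+1) 0) && keepU (rank (cur.getD (i+1) 0)))
          then [(((cur.take i).countP (fun x => keepS x && keepU (rank x))), b)] else [])
        ++ deleteAux (fun x => keepS x && keepU (rank x)) (swapAt' cur i) rest from rfl]
      rw [hga, hgb, htk]
      have branchA : ∀ (hka : keepS a = false),
          deleteAux keepU (List.map rank (List.filter keepS cur))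
            ((if (keepS a && keepS b') = true then [(List.countP keepS pre, b)] else []) ++
              deleteAux keepS (swapAt' cur i) rest) =
          (if (keepS a && keepU (rank a) && (keepS b' && keepU (rank b'))) = true then
              [(List.countP (fun x => keepS x && keepU (rank x)) pre, b)]
            else []) ++
            deleteAux (fun x => keepS x && keepU (rank x)) (swapAt' cur i) rest := by
        intro hka
        rw [hka]
        simp only [Bool.false_and, Bool.false_eq_true, if_false, List.nil_append]
        have hfilt : (swapAt' cur i).filter keepS = cur.filter keepS := by
          rw [hswap, hd]
          simp [List.filter_append, List.filter_cons, hka]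
        rw [← hfilt, ih (swapAt' cur i) hrest]
      have branchB : ∀ (hka : keepS a = true) (hkb : keepS b' = false),
          deleteAux keepU (List.map rank (List.filter keepS cur))
            ((if (keepS a && keepS b') = true then [(List.countP keepS pre, b)] else []) ++
              deleteAux keepS (swapAt' cur i) rest) =
          (if (keepS a && keepU (rank a) && (keepS b' && keepU (rank b'))) = true then
              [(List.countP (fun x => keepS x && keepU (rank x)) pre, b)]
            else []) ++
            deleteAux (fun x => keepS x && keepU (rank x)) (swapAt' cur i) rest := by
        intro hka hkb
        rw [hka, hkb]
        simp only [Bool.true_and, Bool.and_false, Bool.false_and, Bool.false_eq_true,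
          if_false, List.nil_append]
        have hfilt : (swapAt' cur i).filter keepS = cur.filter keepS := by
          rw [hswap, hd]
          simp [List.filter_append, List.filter_cons, hka, hkb]
        rw [← hfilt, ih (swapAt' cur i) hrest]
      rcases Bool.eq_false_or_eq_true (keepS a) with hka | hka
      · -- keepS a = true
        rcases Bool.eq_false_or_eq_true (keepS b') with hkb | hkb
        · -- both kept
          rw [hka, hkb]
          simp only [Bool.true_and, Bool.and_true, reduceIte, List.singleton_append]
          have hcurd : (cur.filter keepS).map rank =
              (pre.filter keepS).map rank ++ rank a :: rank b' :: (post.filter keepS).map rank := by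
            rw [hd]
            simp [List.filter_append, List.filter_cons, hka, hkb]
          have hplen : ((pre.filter keepS).map rank).length = pre.countP keepS := by
            simp [List.countP_eq_length_filter]
          rw [show deleteAux keepU ((cur.filter keepS).map rank)
              ((pre.countP keepS, b) :: deleteAux keepS (swapAt' cur i) rest) =
            (if keepU (((cur.filter keepS).map rank).getD (pre.countP keepS) 0) &&
                keepU (((cur.filter keepS).map rank).getD (pre.countP keepS + 1) 0)
              then [((((cur.filter keepS).map rank).take (pre.countP keepS)).countP keepU, b)]
              else [])
            ++ deleteAux keepU (swapAt' ((cur.filter keepS).map rank) (pre.countP keepS))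
                (deleteAux keepS (swapAt' cur i) rest) from rfl]
          rw [hcurd, ← hplen, getD_len, getD_len1, take_len, swapAt'_append]
          have hnext : (pre.filter keepS).map rank ++
                rank b' :: rank a :: (post.filter keepS).map rank
              = ((swapAt' cur i).filter keepS).map rank := by
            rw [hswap]
            simp [List.filter_append, List.filter_cons, hka, hkb]
          rw [hnext, ih (swapAt' cur i) hrest]
          have hcc : ((pre.filter keepS).map rank).countP keepU
              = pre.countP (fun x => keepS x && keepU (rank x)) := by
            rw [List.countP_map, List.countP_filter]
            congr 1
            funext x
            simp [Bool.and_comm]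
          rw [hcc]
        · exact branchB hka hkb
      · exact branchA hka

-- § rank facts
lemma rank_range (keepS : ℕ → Bool) (n : ℕ) :
    ((List.range n).filter keepS).map (fun x => (List.range x).countP keepS)
      = List.range ((List.range n).countP keepS) := by
  induction n with
  | zero => rfl
  | succ n ih =>
      rw [List.range_succ, List.filter_append, List.countP_append, List.map_append, ih]
      rcases Bool.eq_false_or_eq_true (keepS n) with hn | hn <;>
        simp [hn, List.range_succ]

lemma countP_range_card {n : ℕ} {S : Finset ℕ} (hS : S ⊆ Finset.range n) :
    (List.range n).countP (fun x => decide (x ∈ S)) = S.card := by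
  rw [List.countP_eq_length_filter]
  have hnd : ((List.range n).filter (fun x => decide (x ∈ S))).Nodup :=
    List.nodup_range.filter _
  rw [← List.toFinset_card_of_nodup hnd]
  congr 1
  ext y
  simp only [List.mem_toFinset, List.mem_filter, List.mem_range, decide_eq_true_eq]
  exact ⟨fun h => h.2, fun h => ⟨Finset.mem_range.1 (hS h), h⟩⟩

-- § powerset counting
lemma card_pair_filter {s : Finset ℕ} {a b : ℕ} (hab : a ≠ b) (ha : a ∈ s) (hb : b ∈ s)
    {k : ℕ} (hk : 2 ≤ k) :
    ((s.powersetCard k).filter (fun U => a ∈ U ∧ b ∈ U)).card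
      = (s.card - 2).choose (k - 2) := by
  rw [show (s.card - 2).choose (k-2) = (((s.erase a).erase b).powersetCard (k-2)).card by
    rw [Finset.card_powersetCard, Finset.card_erase_of_mem (Finset.mem_erase.2 ⟨hab.symm, hb⟩),
      Finset.card_erase_of_mem ha, Nat.sub_sub]]
  apply Finset.card_nbij' (fun U => (U.erase a).erase b) (fun V => insert a (insert b V))
  · intro U hU
    rw [Finset.mem_coe, Finset.mem_filter, Finset.mem_powersetCard] at hU
    obtain ⟨⟨hUs, hUc⟩, haU, hbU⟩ := hU
    rw [Finset.mem_coe, Finset.mem_powersetCard]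
    constructor
    · intro x hx
      rw [Finset.mem_erase] at hx ⊢
      exact ⟨hx.1, Finset.mem_erase.2 ⟨(Finset.mem_erase.1 hx.2).1, hUs (Finset.mem_erase.1 hx.2).2⟩⟩
    · rw [Finset.card_erase_of_mem (Finset.mem_erase.2 ⟨hab.symm, hbU⟩),
        Finset.card_erase_of_mem haU, hUc]
      omega
  · intro V hV
    rw [Finset.mem_coe, Finset.mem_powersetCard] at hV
    obtain ⟨hVs, hVc⟩ := hV
    have haV : a ∉ insert b V := by
      simp only [Finset.mem_insert]
      rintro (rfl | h)
      · exact hab rfl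
      · exact (Finset.mem_erase.1 (Finset.mem_erase.1 (hVs h)).2).1 rfl
    have hbV : b ∉ V := fun h => (Finset.mem_erase.1 (hVs h)).1 rfl
    rw [Finset.mem_coe, Finset.mem_filter, Finset.mem_powersetCard]
    refine ⟨⟨?_, ?_⟩, Finset.mem_insert_self a _, ?_⟩
    · intro x hx
      rcases Finset.mem_insert.1 hx with rfl | hx
      · exact ha
      rcases Finset.mem_insert.1 hx with rfl | hx
      · exact hb
      · exact (Finset.erase_subset _ _) ((Finset.erase_subset _ _) (hVs hx))
    · rw [Finset.card_insert_of_notMem haV, Finset.card_insert_of_notMem hbV, hVc]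
      omega
    · exact Finset.mem_insert_of_mem (Finset.mem_insert_self b V)
  · intro U hU
    rw [Finset.mem_coe, Finset.mem_filter] at hU
    obtain ⟨_, haU, hbU⟩ := hU
    dsimp only
    rw [Finset.insert_erase (Finset.mem_erase.2 ⟨hab.symm, hbU⟩), Finset.insert_erase haU]
  · intro V hV
    rw [Finset.mem_coe, Finset.mem_powersetCard] at hV
    have haV : a ∉ insert b V := by
      simp only [Finset.mem_insert]
      rintro (rfl | h)
      · exact hab rfl
      · exact (Finset.mem_erase.1 (Finset.mem_erase.1 (hV.1 h)).2).1 rfl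
    have hbV : b ∉ V := fun h => (Finset.mem_erase.1 (hV.1 h)).1 rfl
    dsimp only
    rw [Finset.erase_insert haV, Finset.erase_insert hbV]

-- § length counting over k-subsets
lemma sum_len (m k : ℕ) (hk : 2 ≤ k) :
    ∀ (w : List (ℕ × Bool)) (l : List ℕ), l.Perm (List.range m) → (∀ p ∈ w, p.1 + 2 ≤ m) →
    ∑ U ∈ (Finset.range m).powersetCard k,
        (deleteAux (fun x => decide (x ∈ U)) l w).length
      = (m - 2).choose (k - 2) * w.length := by
  intro w
  induction w with
  | nil => intro l _ _; simp [deleteAux]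
  | cons p rest ih =>
      obtain ⟨i, b⟩ := p
      intro l hperm hw
      have hlen : l.length = m := by simpa using hperm.length_eq
      have him : i + 2 ≤ m := hw (i, b) (by simp)
      obtain ⟨pre, a, b', post, hd, hl⟩ := exists_two l i (by omega)
      have hswap : swapAt' l i = pre ++ b' :: a :: post := by rw [hd, ← hl, swapAt'_append]
      have hperm' : (swapAt' l i).Perm (List.range m) := by
        rw [hswap]
        exact ((List.Perm.append_left pre (List.Perm.swap a b' post)).trans (hd ▸ hperm))
      have hnd : l.Nodup := hperm.nodup_iff.2 List.nodup_range
      have hab : a ≠ b' := by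
        rw [hd] at hnd
        have := (List.nodup_append.1 hnd).2.1
        simp at this
        exact fun h => (this.1.1 (h ▸ rfl)).elim
      have ham : a ∈ Finset.range m := by
        rw [Finset.mem_range, ← List.mem_range]
        exact hperm.mem_iff.1 (by rw [hd]; simp)
      have hbm : b' ∈ Finset.range m := by
        rw [Finset.mem_range, ← List.mem_range]
        exact hperm.mem_iff.1 (by rw [hd]; simp)
      have hga : l.getD i 0 = a := by rw [hd, ← hl, getD_len]
      have hgb : l.getD (i+1) 0 = b' := by rw [hd, ← hl, getD_len1]
      have step : ∀ U : Finset ℕ,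
          (deleteAux (fun x => decide (x ∈ U)) l ((i,b) :: rest)).length
          = (if a ∈ U ∧ b' ∈ U then 1 else 0)
            + (deleteAux (fun x => decide (x ∈ U)) (swapAt' l i) rest).length := by
        intro U
        rw [show deleteAux (fun x => decide (x ∈ U)) l ((i,b) :: rest) =
          (if (decide (l.getD i 0 ∈ U) && decide (l.getD (i+1) 0 ∈ U))
            then [(((l.take i).countP (fun x => decide (x ∈ U))), b)] else [])
          ++ deleteAux (fun x => decide (x ∈ U)) (swapAt' l i) rest from rfl]
        rw [List.length_append, hga, hgb]
        congr 1
        by_cases hc : a ∈ U ∧ b' ∈ U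
        · rw [if_pos hc]
          simp [hc.1, hc.2]
        · rw [if_neg hc]
          rcases Decidable.not_and_iff_or_not.1 hc with hna | hnb
          · simp [hna]
          · simp [hnb]
      simp only [step]
      rw [Finset.sum_add_distrib, ih (swapAt' l i) hperm' (fun q hq => hw q (by simp [hq]))]
      have hsum : ∑ U ∈ (Finset.range m).powersetCard k, (if a ∈ U ∧ b' ∈ U then 1 else 0)
          = (m - 2).choose (k - 2) := by
        rw [← Finset.card_filter]
        rw [card_pair_filter hab ham hbm hk, Finset.card_range]
      rw [hsum]
      simp [Nat.mul_succ, Nat.add_comm]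


/-- a `k`-regular winding diagram is `m`-regular winding for all `k ≤ m ≤ n`. -/
theorem regWinding_mono (n k m : ℕ) (D : List (ℕ × Bool)) (hD : WValid n D)
    (hk : 2 ≤ k) (hkm : k ≤ m) (hmn : m ≤ n) (h : RegWinding n k D) :
    RegWinding n m D := by
  intro S hSsub hScard
  set keepS : ℕ → Bool := fun x => decide (x ∈ S) with hkeepS
  set rank : ℕ → ℕ := fun x => (List.range x).countP keepS with hrank
  have hScount : (List.range n).countP keepS = m := by
    rw [countP_range_card hSsub, hScard]
  have hDlen : ∀ p ∈ D, p.1 + 2 ≤ (List.range n).length := by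
    intro p hp; simpa using hD p hp
  set E := subDiag n S D with hE
  have hEvalid : WValid m E := by
    intro q hq
    have := deleteAux_valid keepS D (List.range n) hDlen q hq
    rwa [hScount] at this
  refine ⟨hEvalid, ?_⟩
  intro D' hD' heval
  have hc : 0 < (m - 2).choose (k - 2) := Nat.choose_pos (by omega)
  have hrangeFact : ((List.range n).filter keepS).map rank = List.range m := by
    rw [hrank, rank_range keepS n, hScount]
  -- the per-subset inequality
  have key : ∀ U ∈ (Finset.range m).powersetCard k,
      (deleteAux (fun x => decide (x ∈ U)) (List.range m) E).length
        ≤ (deleteAux (fun x => decide (x ∈ U)) (List.range m) D').length := by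
    intro U hU
    rw [Finset.mem_powersetCard] at hU
    obtain ⟨hUsub, hUcard⟩ := hU
    set keepU : ℕ → Bool := fun j => decide (j ∈ U) with hkeepU
    have hUcount : (List.range m).countP keepU = k := by
      rw [hkeepU, countP_range_card hUsub, hUcard]
    set T : Finset ℕ := S.filter (fun x => rank x ∈ U) with hT
    have hTfun : (fun x => decide (x ∈ T)) = fun x => keepS x && keepU (rank x) := by
      funext x
      rw [hT, hkeepS, hkeepU]
      simp [Finset.mem_filter]
    have key1 : deleteAux keepU (List.range m) E = subDiag n T D := by
      rw [subDiag, hTfun, ← deleteAux_comp keepS keepU rank D (List.range n) hDlen,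
        hrangeFact]
      rfl
    have key2 : T ⊆ Finset.range n := (Finset.filter_subset _ S).trans hSsub
    have key3 : T.card = k := by
      have h1 : (List.range n).countP (fun x => decide (x ∈ T)) = T.card :=
        countP_range_card key2
      rw [← h1, hTfun]
      have h2 : (List.range n).countP (fun x => keepS x && keepU (rank x))
          = (((List.range n).filter keepS).map rank).countP keepU := by
        rw [List.countP_map, List.countP_filter]
        congr 1
        funext x
        simp [Bool.and_comm]
      rw [h2, hrangeFact, hUcount]
    obtain ⟨_, hmin⟩ := h T key2 key3
    have key5 : WValid k (deleteAux keepU (List.range m) D') := by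
      intro q hq
      have := deleteAux_valid keepU D' (List.range m) (fun p hp => by simpa using hD' p hp) q hq
      rwa [hUcount] at this
    have key6 : evalN k (deleteAux keepU (List.range m) D')
        = evalN k (deleteAux keepU (List.range m) E) := by
      have h1 := Phi_eval m k keepU hUcount D' hD' ⟨List.range m, List.Perm.refl _⟩
      have h2 := Phi_eval m k keepU hUcount E hEvalid ⟨List.range m, List.Perm.refl _⟩
      rw [heval] at h1
      rw [← h1, ← h2]
    have := hmin (deleteAux keepU (List.range m) D') key5 (by rw [key6, key1])
    rw [← key1] at this
    exact this
  have hs1 := sum_len m k hk E (List.range m) (List.Perm.refl _) hEvalid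
  have hs2 := sum_len m k hk D' (List.range m) (List.Perm.refl _) hD'
  have hsum := Finset.sum_le_sum key
  rw [hs1, hs2] at hsum
  exact Nat.le_of_mul_le_mul_left hsum hc
end
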